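/- In the algorithmic setting described in the context, for every k ≥ 0 one has H(X^k, X^{k−1}, ε^k) − H(X^{k+1}, X^k, ε^{k+1}) ≥ C ‖X^k − X^{k−1}‖_F², where C = (β/2)(1 − ((3L_f + β)/β) ᾱ²) > 0. Consequently the sequence {H(X^k, X^{k−1}, ε^k)} is monotonically nonincreasing and, being bounded below, converges. -/

import Mathlib

open Filter Topology Matrix

/-- The singular values of a real `m × n` matrix (`m ≤ n`), in nonincreasing order:
`sval X i` is the `(i+1)`-th largest singular value of `X`. -/
noncomputable def sval {m n : ℕ} (X : Matrix (Fin m) (Fin n) ℝ) : Fin m → ℝ :=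
  fun i =>
    let ev : Fin m → ℝ := (Matrix.isHermitian_mul_conjTranspose_self X).eigenvalues
    Real.sqrt (ev (Tuple.sort ev i.rev))

/-- The `m × n` matrix with the vector `d` on its main diagonal and zeros elsewhere. -/
def rdiag {m n : ℕ} (d : Fin m → ℝ) : Matrix (Fin m) (Fin n) ℝ :=
  Matrix.of fun i j => if (j : ℕ) = (i : ℕ) then d i else 0

/-- The Frobenius norm of a matrix. -/
noncomputable def frobNorm {m n : ℕ} (X : Matrix (Fin m) (Fin n) ℝ) : ℝ :=
  Real.sqrt (∑ i, ∑ j, (X i j) ^ 2)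

/-- The Frobenius (trace) inner product of two matrices. -/
def finner {m n : ℕ} (A B : Matrix (Fin m) (Fin n) ℝ) : ℝ :=
  ∑ i, ∑ j, A i j * B i j

/-- `G` is the (Fréchet) gradient of `f : ℝ^{m×n} → ℝ` at `X`, with respect to the
Frobenius inner product. -/
def HasFrobGradientAt {m n : ℕ} (f : Matrix (Fin m) (Fin n) ℝ → ℝ)
    (G X : Matrix (Fin m) (Fin n) ℝ) : Prop :=
  Filter.Tendsto
    (fun H : Matrix (Fin m) (Fin n) ℝ => |f (X + H) - f X - finner G H| / frobNorm H)
    (nhdsWithin 0 {0}ᶜ) (nhds 0)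


section Helpers

variable {m n : ℕ}

lemma sumsq_nonneg (A : Matrix (Fin m) (Fin n) ℝ) : 0 ≤ ∑ i, ∑ j, (A i j) ^ 2 :=
  Finset.sum_nonneg fun _ _ => Finset.sum_nonneg fun _ _ => sq_nonneg _

lemma frob_nonneg (A : Matrix (Fin m) (Fin n) ℝ) : 0 ≤ frobNorm A := Real.sqrt_nonneg _

lemma frob_sq (A : Matrix (Fin m) (Fin n) ℝ) : frobNorm A ^ 2 = ∑ i, ∑ j, (A i j) ^ 2 :=
  Real.sq_sqrt (sumsq_nonneg A)

lemma frob_smul (c : ℝ) (A : Matrix (Fin m) (Fin n) ℝ) :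
    frobNorm (c • A) = |c| * frobNorm A := by
  unfold frobNorm
  have h : ∑ i, ∑ j, ((c • A) i j) ^ 2 = c ^ 2 * ∑ i, ∑ j, (A i j) ^ 2 := by
    simp only [Matrix.smul_apply, smul_eq_mul, mul_pow, Finset.mul_sum]
  rw [h, Real.sqrt_mul (sq_nonneg c), Real.sqrt_sq_eq_abs]

lemma frob_neg (A : Matrix (Fin m) (Fin n) ℝ) : frobNorm (-A) = frobNorm A := by
  have : (-A) = (-1 : ℝ) • A := by simp
  rw [this, frob_smul]; simp

lemma frob_zero : frobNorm (0 : Matrix (Fin m) (Fin n) ℝ) = 0 := by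
  simp [frobNorm]

lemma frob_pos {A : Matrix (Fin m) (Fin n) ℝ} (hA : A ≠ 0) : 0 < frobNorm A := by
  obtain ⟨i, j, hij⟩ : ∃ i j, A i j ≠ 0 := by
    by_contra h
    push_neg at h
    exact hA (by ext i j; simpa using h i j)
  have h1 : (A i j) ^ 2 ≤ ∑ j, (A i j) ^ 2 :=
    Finset.single_le_sum (f := fun j => (A i j) ^ 2) (fun _ _ => sq_nonneg _) (Finset.mem_univ j)
  have h2 : ∑ j, (A i j) ^ 2 ≤ ∑ i, ∑ j, (A i j) ^ 2 :=
    Finset.single_le_sum (f := fun i => ∑ j, (A i j) ^ 2)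
      (fun _ _ => Finset.sum_nonneg fun _ _ => sq_nonneg _) (Finset.mem_univ i)
  have h3 : 0 < (A i j) ^ 2 := lt_of_le_of_ne (sq_nonneg _) (Ne.symm (pow_ne_zero 2 hij))
  exact Real.sqrt_pos.2 (lt_of_lt_of_le h3 (h1.trans h2))

lemma finner_comm (A B : Matrix (Fin m) (Fin n) ℝ) : finner A B = finner B A := by
  unfold finner; congr 1; ext i; congr 1; ext j; ring

lemma finner_sub_left (A B C : Matrix (Fin m) (Fin n) ℝ) :
    finner (A - B) C = finner A C - finner B C := by
  simp [finner, sub_mul, Finset.sum_sub_distrib]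

lemma finner_sub_right (A B C : Matrix (Fin m) (Fin n) ℝ) :
    finner A (B - C) = finner A B - finner A C := by
  simp [finner, mul_sub, Finset.sum_sub_distrib]

lemma finner_neg_left (A B : Matrix (Fin m) (Fin n) ℝ) : finner (-A) B = -finner A B := by
  simp [finner, Finset.sum_neg_distrib]

lemma finner_smul_right (c : ℝ) (A B : Matrix (Fin m) (Fin n) ℝ) :
    finner A (c • B) = c * finner A B := by
  simp only [finner, Matrix.smul_apply, smul_eq_mul, Finset.mul_sum]
  congr 1; ext i; congr 1; ext j; ring

lemma finner_zero_right (A : Matrix (Fin m) (Fin n) ℝ) : finner A 0 = 0 := by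
  simp [finner]

lemma abs_finner_le (A B : Matrix (Fin m) (Fin n) ℝ) :
    |finner A B| ≤ frobNorm A * frobNorm B := by
  have h := Finset.sum_mul_sq_le_sq_mul_sq Finset.univ
    (fun p : Fin m × Fin n => A p.1 p.2) (fun p : Fin m × Fin n => B p.1 p.2)
  have h1 : finner A B = ∑ p : Fin m × Fin n, A p.1 p.2 * B p.1 p.2 := by
    rw [Fintype.sum_prod_type]; rfl
  have h2 : (∑ p : Fin m × Fin n, (A p.1 p.2) ^ 2) = ∑ i, ∑ j, (A i j) ^ 2 := by
    rw [Fintype.sum_prod_type]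
  have h3 : (∑ p : Fin m × Fin n, (B p.1 p.2) ^ 2) = ∑ i, ∑ j, (B i j) ^ 2 := by
    rw [Fintype.sum_prod_type]
  rw [h2, h3] at h
  calc |finner A B| = Real.sqrt ((finner A B) ^ 2) := (Real.sqrt_sq_eq_abs _).symm
    _ ≤ Real.sqrt ((∑ i, ∑ j, (A i j) ^ 2) * ∑ i, ∑ j, (B i j) ^ 2) := by
        apply Real.sqrt_le_sqrt; rw [h1]; exact h
    _ = frobNorm A * frobNorm B := by
        rw [Real.sqrt_mul (sumsq_nonneg A)]; rfl

lemma finner_le (A B : Matrix (Fin m) (Fin n) ℝ) :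
    finner A B ≤ frobNorm A * frobNorm B :=
  (le_abs_self _).trans (abs_finner_le A B)

lemma frob_continuous : Continuous (frobNorm : Matrix (Fin m) (Fin n) ℝ → ℝ) := by
  unfold frobNorm
  apply Real.continuous_sqrt.comp
  apply continuous_finset_sum; intro i _
  apply continuous_finset_sum; intro j _
  exact ((continuous_apply j).comp (continuous_apply i)).pow 2

end Helpers

section Analysis

variable {m n : ℕ}

lemma line_hasDerivAt {f : Matrix (Fin m) (Fin n) ℝ → ℝ} {G : Matrix (Fin m) (Fin n) ℝ}
    (Z V : Matrix (Fin m) (Fin n) ℝ) (t : ℝ)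
    (h : HasFrobGradientAt f G (Z + t • V)) :
    HasDerivAt (fun s : ℝ => f (Z + s • V)) (finner G V) t := by
  by_cases hV : V = 0
  · subst hV
    simp only [smul_zero, add_zero, finner_zero_right]
    exact hasDerivAt_const t _
  · have hVn : 0 < frobNorm V := frob_pos hV
    set W := Z + t • V with hW
    rw [hasDerivAt_iff_tendsto_slope_zero]
    have hmap : Tendsto (fun s : ℝ => s • V) (𝓝[≠] (0 : ℝ))
        (nhdsWithin (0 : Matrix (Fin m) (Fin n) ℝ) {0}ᶜ) := by
      apply tendsto_nhdsWithin_of_tendsto_nhds_of_eventually_within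
      · have hc : Continuous fun s : ℝ => s • V := continuous_id.smul continuous_const
        have := (hc.tendsto 0).mono_left
          (nhdsWithin_le_nhds (s := ({0}ᶜ : Set ℝ)))
        simpa using this
      · filter_upwards [eventually_mem_nhdsWithin] with s hs
        simp only [Set.mem_compl_iff, Set.mem_singleton_iff] at hs ⊢
        exact smul_ne_zero hs hV
    have h2 := h.comp hmap
    have h3 : Tendsto
        (fun u : ℝ => (|f (W + u • V) - f W - finner G (u • V)| / frobNorm (u • V)) * frobNorm V)
        (𝓝[≠] (0 : ℝ)) (𝓝 0) := by
      simpa using h2.mul_const (frobNorm V)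
    rw [tendsto_iff_dist_tendsto_zero]
    apply h3.congr'
    filter_upwards [eventually_mem_nhdsWithin] with u hu
    have hu0 : u ≠ 0 := by simpa using hu
    have e1 : Z + (t + u) • V = W + u • V := by rw [hW, add_smul]; abel
    rw [e1, Real.dist_eq]
    have e2 : f (W + u • V) - f W - finner G (u • V)
        = (f (W + u • V) - f W) - u * finner G V := by rw [finner_smul_right]
    rw [e2, frob_smul]
    have e3 : u⁻¹ • (f (W + u • V) - f W) - finner G V
        = u⁻¹ * ((f (W + u • V) - f W) - u * finner G V) := by
      rw [smul_eq_mul, mul_sub u⁻¹ (f (W + u • V) - f W) (u * finner G V), ← mul_assoc, inv_mul_cancel₀ hu0, one_mul]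
    rw [e3, abs_mul, abs_inv]
    have hu' : |u| ≠ 0 := by simpa using hu0
    field_simp

lemma descent_aux {f : Matrix (Fin m) (Fin n) ℝ → ℝ}
    {Gf : Matrix (Fin m) (Fin n) ℝ → Matrix (Fin m) (Fin n) ℝ} {Lf : ℝ}
    (hgrad : ∀ Z, HasFrobGradientAt f (Gf Z) Z)
    (hlip : ∀ Z W, frobNorm (Gf Z - Gf W) ≤ Lf * frobNorm (Z - W))
    (Z V : Matrix (Fin m) (Fin n) ℝ) :
    f (Z + V) ≤ f Z + finner (Gf Z) V + Lf / 2 * frobNorm V ^ 2 := by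
  set c := finner (Gf Z) V with hc
  set q := Lf * frobNorm V ^ 2 with hq
  set φ : ℝ → ℝ := fun t => f (Z + t • V) - c * t - q * t ^ 2 / 2 with hφ
  have hder : ∀ t : ℝ, HasDerivAt φ (finner (Gf (Z + t • V)) V - c - q * t) t := by
    intro t
    have h1 : HasDerivAt (fun s : ℝ => f (Z + s • V)) (finner (Gf (Z + t • V)) V) t :=
      line_hasDerivAt Z V t (hgrad _)
    have h2 : HasDerivAt (fun s : ℝ => c * s) c t := by
      simpa using (hasDerivAt_id t).const_mul c
    have h3 : HasDerivAt (fun s : ℝ => q * s ^ 2 / 2) (q * t) t := by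
      have := ((hasDerivAt_pow 2 t).const_mul q).div_const 2
      refine this.congr_deriv ?_
      ring
    exact (h1.sub h2).sub h3
  have hmono : AntitoneOn φ (Set.Icc 0 1) := by
    apply antitoneOn_of_deriv_nonpos (convex_Icc 0 1)
    · exact fun t _ => ((hder t).continuousAt).continuousWithinAt
    · intro t _
      exact ((hder t).differentiableAt).differentiableWithinAt
    · intro t ht
      rw [interior_Icc] at ht
      rw [(hder t).deriv]
      have e : finner (Gf (Z + t • V)) V - c = finner (Gf (Z + t • V) - Gf Z) V := by
        rw [finner_sub_left]
      have hb : finner (Gf (Z + t • V)) V - c ≤ Lf * t * frobNorm V ^ 2 := by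
        rw [e]
        calc finner (Gf (Z + t • V) - Gf Z) V
            ≤ frobNorm (Gf (Z + t • V) - Gf Z) * frobNorm V := finner_le _ _
          _ ≤ (Lf * frobNorm (Z + t • V - Z)) * frobNorm V := by
              apply mul_le_mul_of_nonneg_right (hlip _ _) (frob_nonneg _)
          _ = Lf * t * frobNorm V ^ 2 := by
              have : Z + t • V - Z = t • V := by abel
              rw [this, frob_smul, abs_of_pos ht.1]; ring
      rw [hq]
      nlinarith [hb]
  have h01 := hmono (Set.left_mem_Icc.2 zero_le_one) (Set.right_mem_Icc.2 zero_le_one)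
    zero_le_one
  have e0 : φ 0 = f Z := by simp [hφ]
  have e1 : φ 1 = f (Z + V) - c - q / 2 := by simp [hφ]
  rw [e0, e1] at h01
  rw [hq] at h01
  linarith

lemma descent_upper {f : Matrix (Fin m) (Fin n) ℝ → ℝ}
    {Gf : Matrix (Fin m) (Fin n) ℝ → Matrix (Fin m) (Fin n) ℝ} {Lf : ℝ}
    (hgrad : ∀ Z, HasFrobGradientAt f (Gf Z) Z)
    (hlip : ∀ Z W, frobNorm (Gf Z - Gf W) ≤ Lf * frobNorm (Z - W))
    (Y A : Matrix (Fin m) (Fin n) ℝ) :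
    f A ≤ f Y + finner (Gf Y) (A - Y) + Lf / 2 * frobNorm (A - Y) ^ 2 := by
  have := descent_aux hgrad hlip Y (A - Y)
  simpa using this

lemma descent_lower {f : Matrix (Fin m) (Fin n) ℝ → ℝ}
    {Gf : Matrix (Fin m) (Fin n) ℝ → Matrix (Fin m) (Fin n) ℝ} {Lf : ℝ}
    (hgrad : ∀ Z, HasFrobGradientAt f (Gf Z) Z)
    (hlip : ∀ Z W, frobNorm (Gf Z - Gf W) ≤ Lf * frobNorm (Z - W))
    (Y A : Matrix (Fin m) (Fin n) ℝ) :
    f Y + finner (Gf Y) (A - Y) - Lf / 2 * frobNorm (A - Y) ^ 2 ≤ f A := by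
  have hgrad' : ∀ Z, HasFrobGradientAt (fun W => -f W) (-Gf Z) Z := by
    intro Z
    have := hgrad Z
    unfold HasFrobGradientAt at this ⊢
    apply this.congr
    intro H
    congr 1
    rw [finner_neg_left, ← abs_neg]
    congr 1; ring
  have hlip' : ∀ Z W, frobNorm ((fun Z => -Gf Z) Z - (fun Z => -Gf Z) W)
      ≤ Lf * frobNorm (Z - W) := by
    intro Z W
    have : -Gf Z - -Gf W = -(Gf Z - Gf W) := by abel
    rw [this, frob_neg]
    exact hlip Z W
  have := descent_upper (f := fun W => -f W) (Gf := fun Z => -Gf Z) hgrad' hlip' Y A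
  simp only [finner_neg_left] at this
  linarith

end Analysis

section More

variable {m n : ℕ}

lemma cont_of_grad {f : Matrix (Fin m) (Fin n) ℝ → ℝ}
    {Gf : Matrix (Fin m) (Fin n) ℝ → Matrix (Fin m) (Fin n) ℝ}
    (hgrad : ∀ Z, HasFrobGradientAt f (Gf Z) Z) : Continuous f := by
  rw [continuous_iff_continuousAt]
  intro X0
  have key : Tendsto (fun H : Matrix (Fin m) (Fin n) ℝ => f (X0 + H)) (𝓝 0) (𝓝 (f X0)) := by
    rw [← nhdsNE_sup_pure (0 : Matrix (Fin m) (Fin n) ℝ), tendsto_sup]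
    constructor
    · have hnorm : Tendsto (fun H : Matrix (Fin m) (Fin n) ℝ => frobNorm H)
          (nhdsWithin 0 {0}ᶜ) (𝓝 0) := by
        have := (frob_continuous.tendsto (0 : Matrix (Fin m) (Fin n) ℝ)).mono_left
          (nhdsWithin_le_nhds (s := ({0}ᶜ : Set (Matrix (Fin m) (Fin n) ℝ))))
        simpa [frob_zero] using this
      have habs : Tendsto (fun H : Matrix (Fin m) (Fin n) ℝ => |f (X0 + H) - f X0|)
          (nhdsWithin 0 {0}ᶜ) (𝓝 0) := by
        have hbd : Tendsto (fun H : Matrix (Fin m) (Fin n) ℝ =>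
            (|f (X0 + H) - f X0 - finner (Gf X0) H| / frobNorm H) * frobNorm H
              + frobNorm (Gf X0) * frobNorm H) (nhdsWithin 0 {0}ᶜ) (𝓝 0) := by
          have h1 := ((hgrad X0).mul hnorm).add (hnorm.const_mul (frobNorm (Gf X0)))
          simpa using h1
        apply squeeze_zero' (Eventually.of_forall fun H => abs_nonneg _) _ hbd
        filter_upwards [eventually_mem_nhdsWithin] with H hH
        have hH0 : H ≠ (0 : Matrix (Fin m) (Fin n) ℝ) := by simpa using hH
        have hfn : 0 < frobNorm H := frob_pos hH0
        have e : |f (X0 + H) - f X0 - finner (Gf X0) H| / frobNorm H * frobNorm H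
            = |f (X0 + H) - f X0 - finner (Gf X0) H| := by
          field_simp
        rw [e]
        calc |f (X0 + H) - f X0|
            = |(f (X0 + H) - f X0 - finner (Gf X0) H) + finner (Gf X0) H| := by ring_nf
          _ ≤ |f (X0 + H) - f X0 - finner (Gf X0) H| + |finner (Gf X0) H| := abs_add_le _ _
          _ ≤ |f (X0 + H) - f X0 - finner (Gf X0) H| + frobNorm (Gf X0) * frobNorm H := by
              linarith [abs_finner_le (Gf X0) H]
      rw [tendsto_iff_dist_tendsto_zero]
      simpa [Real.dist_eq] using habs
    · have : Tendsto (fun H : Matrix (Fin m) (Fin n) ℝ => f (X0 + H))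
          (pure (0 : Matrix (Fin m) (Fin n) ℝ)) (𝓝 (f (X0 + 0))) := tendsto_pure_nhds _ _
      simpa using this
  have hsub : Tendsto (fun Z : Matrix (Fin m) (Fin n) ℝ => Z - X0) (𝓝 X0)
      (𝓝 (0 : Matrix (Fin m) (Fin n) ℝ)) := by
    have : Continuous fun Z : Matrix (Fin m) (Fin n) ℝ => Z - X0 :=
      continuous_id.sub continuous_const
    simpa using this.tendsto X0
  have h := key.comp hsub
  unfold ContinuousAt
  have h' : Tendsto (fun Z : Matrix (Fin m) (Fin n) ℝ => f (X0 + (Z - X0))) (𝓝 X0)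
      (𝓝 (f X0)) := h
  apply h'.congr
  intro Z
  congr 1
  abel

lemma lb_on_ball {f : Matrix (Fin m) (Fin n) ℝ → ℝ} (hf : Continuous f) {R : ℝ} (hR : 0 ≤ R) :
    ∃ M : ℝ, ∀ Z : Matrix (Fin m) (Fin n) ℝ, frobNorm Z ≤ R → M ≤ f Z := by
  set K : Set (Matrix (Fin m) (Fin n) ℝ) :=
    Set.univ.pi fun _ : Fin m => Set.univ.pi fun _ : Fin n => Set.Icc (-R) R with hK
  have hKc : IsCompact K :=
    isCompact_univ_pi fun _ => isCompact_univ_pi fun _ => isCompact_Icc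
  have hKne : K.Nonempty := by
    refine ⟨0, ?_⟩
    rw [hK]; apply Set.mem_univ_pi.mpr
    intro i
    rw [Set.mem_univ_pi]
    intro j
    simp only [Matrix.zero_apply, Set.mem_Icc]
    constructor <;> linarith
  obtain ⟨Z0, _, hZ0⟩ := hKc.exists_isMinOn hKne hf.continuousOn
  refine ⟨f Z0, ?_⟩
  intro Z hZ
  refine isMinOn_iff.mp hZ0 Z ?_
  rw [hK]; apply Set.mem_univ_pi.mpr
  intro i
  rw [Set.mem_univ_pi]
  intro j
  have h1 : (Z i j) ^ 2 ≤ ∑ j, (Z i j) ^ 2 :=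
    Finset.single_le_sum (f := fun j => (Z i j) ^ 2) (fun _ _ => sq_nonneg _) (Finset.mem_univ j)
  have h2 : ∑ j, (Z i j) ^ 2 ≤ ∑ i, ∑ j, (Z i j) ^ 2 :=
    Finset.single_le_sum (f := fun i => ∑ j, (Z i j) ^ 2)
      (fun _ _ => Finset.sum_nonneg fun _ _ => sq_nonneg _) (Finset.mem_univ i)
  have h3 : |Z i j| ≤ R := by
    have h4 : (Z i j) ^ 2 ≤ frobNorm Z ^ 2 := by rw [frob_sq]; exact h1.trans h2
    have h5 : frobNorm Z ^ 2 ≤ R ^ 2 := by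
      exact pow_le_pow_left₀ (frob_nonneg Z) hZ 2
    calc |Z i j| = Real.sqrt ((Z i j) ^ 2) := (Real.sqrt_sq_eq_abs _).symm
      _ ≤ Real.sqrt (R ^ 2) := Real.sqrt_le_sqrt (h4.trans h5)
      _ = R := Real.sqrt_sq hR
  exact abs_le.mp h3

lemma rpow_tangent {p u v : ℝ} (hp0 : 0 < p) (hp1 : p ≤ 1) (hu : 0 < u) (hv : 0 ≤ v) :
    v ^ p ≤ u ^ p + p * u ^ (p - 1) * (v - u) := by
  set s : ℝ := v / u - 1 with hs
  have hs1 : -1 ≤ s := by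
    have : 0 ≤ v / u := div_nonneg hv hu.le
    simp [hs]; linarith
  have hber : (1 + s) ^ p ≤ 1 + p * s := rpow_one_add_le_one_add_mul_self hs1 hp0.le hp1
  have h1s : 1 + s = v / u := by rw [hs]; ring
  rw [h1s] at hber
  have hdiv : (v / u) ^ p = v ^ p / u ^ p := Real.div_rpow hv hu.le p
  rw [hdiv] at hber
  have hup : 0 < u ^ p := Real.rpow_pos_of_pos hu p
  have h2 := mul_le_mul_of_nonneg_left hber hup.le
  rw [mul_div_cancel₀ _ hup.ne'] at h2
  calc v ^ p ≤ u ^ p * (1 + p * s) := h2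
    _ = u ^ p + p * (u ^ p / u) * (v - u) := by
        rw [hs]
        field_simp
    _ = u ^ p + p * u ^ (p - 1) * (v - u) := by
        rw [← Real.rpow_sub_one hu.ne' p]

lemma sval_nonneg (X : Matrix (Fin m) (Fin n) ℝ) (i : Fin m) : 0 ≤ sval X i :=
  Real.sqrt_nonneg _

end More

set_option maxHeartbeats 1000000 in
/-- Sufficient decrease of the merit function
`H(A, B, e) = f(A) + (β/2)‖A − B‖_F² + λ ∑ᵢ (σᵢ(A) + eᵢ)^p` along the iterates of the
extrapolated iteratively reweighted nuclear norm algorithm: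
`H(X^k, X^{k−1}, ε^k) − H(X^{k+1}, X^k, ε^{k+1}) ≥ C ‖X^k − X^{k−1}‖_F²` with
`C = (β/2)(1 − ((3L_f + β)/β) ᾱ²) > 0`; hence `{H(X^k, X^{k−1}, ε^k)}` is
nonincreasing and converges. (Here `X^{−1} = X^0`, realized by truncated subtraction.) -/
theorem stmt_2 {m n : ℕ} (hmn : m ≤ n) (p lam Lf β alphabar : ℝ)
    (hp0 : 0 < p) (hp1 : p < 1) (hlam : 0 < lam)
    (hLf : 0 ≤ Lf) (hβ : Lf < β)
    (hab0 : 0 < alphabar) (hab1 : alphabar < Real.sqrt (β / (3 * Lf + β)))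
    (f : Matrix (Fin m) (Fin n) ℝ → ℝ)
    (Gf : Matrix (Fin m) (Fin n) ℝ → Matrix (Fin m) (Fin n) ℝ)
    (hgrad : ∀ Z, HasFrobGradientAt f (Gf Z) Z)
    (hlip : ∀ Z W, frobNorm (Gf Z - Gf W) ≤ Lf * frobNorm (Z - W))
    (hlevel : ∀ cc : ℝ, ∃ R : ℝ, ∀ Z : Matrix (Fin m) (Fin n) ℝ,
      f Z + lam * (∑ i, sval Z i ^ p) ≤ cc → frobNorm Z ≤ R)
    (X Y : ℕ → Matrix (Fin m) (Fin n) ℝ) (ε : ℕ → Fin m → ℝ)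
    (hε : ∀ k i, 0 < ε k i) (hεmono : ∀ k i, ε (k + 1) i ≤ ε k i)
    (α : ℕ → ℝ) (hα : ∀ k, α k ∈ Set.Icc 0 alphabar)
    (hY : ∀ k, Y k = X k + α k • (X k - X (k - 1)))
    (hmin : ∀ k, ∀ Z : Matrix (Fin m) (Fin n) ℝ,
      f (Y k) + finner (X (k + 1)) (Gf (Y k))
          + β / 2 * frobNorm (X (k + 1) - Y k) ^ 2
          + β / 2 * frobNorm (X (k + 1) - X k) ^ 2
          + lam * ∑ i, (p * (sval (X k) i + ε k i) ^ (p - 1)) * sval (X (k + 1)) i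
        ≤ f (Y k) + finner Z (Gf (Y k))
          + β / 2 * frobNorm (Z - Y k) ^ 2
          + β / 2 * frobNorm (Z - X k) ^ 2
          + lam * ∑ i, (p * (sval (X k) i + ε k i) ^ (p - 1)) * sval Z i) :
    0 < β / 2 * (1 - (3 * Lf + β) / β * alphabar ^ 2) ∧
    (∀ k : ℕ,
      β / 2 * (1 - (3 * Lf + β) / β * alphabar ^ 2) * frobNorm (X k - X (k - 1)) ^ 2 ≤
        (f (X k) + β / 2 * frobNorm (X k - X (k - 1)) ^ 2
            + lam * ∑ i, (sval (X k) i + ε k i) ^ p)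
        - (f (X (k + 1)) + β / 2 * frobNorm (X (k + 1) - X k) ^ 2
            + lam * ∑ i, (sval (X (k + 1)) i + ε (k + 1) i) ^ p)) ∧
    Antitone (fun k : ℕ => f (X k) + β / 2 * frobNorm (X k - X (k - 1)) ^ 2
        + lam * ∑ i, (sval (X k) i + ε k i) ^ p) ∧
    ∃ l : ℝ, Filter.Tendsto (fun k : ℕ => f (X k) + β / 2 * frobNorm (X k - X (k - 1)) ^ 2
        + lam * ∑ i, (sval (X k) i + ε k i) ^ p) Filter.atTop (nhds l) := by
  have hβ0 : 0 < β := lt_of_le_of_lt hLf hβ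
  have h3β : 0 < 3 * Lf + β := by linarith
  set C := β / 2 * (1 - (3 * Lf + β) / β * alphabar ^ 2) with hC
  have hq : alphabar ^ 2 < β / (3 * Lf + β) := by
    have hs : Real.sqrt (β / (3 * Lf + β)) * Real.sqrt (β / (3 * Lf + β))
        = β / (3 * Lf + β) := Real.mul_self_sqrt (by positivity)
    calc alphabar ^ 2 = alphabar * alphabar := sq alphabar
      _ < Real.sqrt (β / (3 * Lf + β)) * Real.sqrt (β / (3 * Lf + β)) :=
          mul_lt_mul'' hab1 hab1 hab0.le hab0.le
      _ = β / (3 * Lf + β) := hs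
  have hC0 : 0 < C := by
    rw [hC]
    have h1 : (3 * Lf + β) / β * alphabar ^ 2 < 1 := by
      rw [div_mul_eq_mul_div, div_lt_one hβ0]
      calc (3 * Lf + β) * alphabar ^ 2 < (3 * Lf + β) * (β / (3 * Lf + β)) :=
          mul_lt_mul_of_pos_left hq h3β
        _ = β := by field_simp
    have h2 : 0 < 1 - (3 * Lf + β) / β * alphabar ^ 2 := by linarith
    positivity
  have hCid : C = β / 2 - (3 * Lf + β) / 2 * alphabar ^ 2 := by
    rw [hC]; field_simp
  -- the key decrease inequality
  have key : ∀ k : ℕ,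
      C * frobNorm (X k - X (k - 1)) ^ 2 ≤
        (f (X k) + β / 2 * frobNorm (X k - X (k - 1)) ^ 2
            + lam * ∑ i, (sval (X k) i + ε k i) ^ p)
        - (f (X (k + 1)) + β / 2 * frobNorm (X (k + 1) - X k) ^ 2
            + lam * ∑ i, (sval (X (k + 1)) i + ε (k + 1) i) ^ p) := by
    intro k
    set a := X (k + 1) with ha
    set b := X k with hb
    set v := X k - X (k - 1) with hv
    have hyk : Y k = b + α k • v := hY k
    have hby : b - Y k = -(α k • v) := by rw [hyk]; abel
    have hNby : frobNorm (b - Y k) ^ 2 = α k ^ 2 * frobNorm v ^ 2 := by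
      rw [hby, frob_neg, frob_smul, mul_pow, sq_abs]
    have D1 : f a ≤ f (Y k) + finner (Gf (Y k)) (a - Y k)
        + Lf / 2 * frobNorm (a - Y k) ^ 2 := descent_upper hgrad hlip (Y k) a
    have D2 : f (Y k) + finner (Gf (Y k)) (b - Y k)
        - Lf / 2 * frobNorm (b - Y k) ^ 2 ≤ f b := descent_lower hgrad hlip (Y k) b
    have M := hmin k b
    rw [show b - X k = 0 from sub_self b, frob_zero] at M
    have E : finner (Gf (Y k)) (a - Y k) - finner (Gf (Y k)) (b - Y k)
        = finner a (Gf (Y k)) - finner b (Gf (Y k)) := by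
      rw [finner_sub_right, finner_sub_right, finner_comm a, finner_comm b]; ring
    -- concavity/weight inequality
    have W : lam * ∑ i, (sval a i + ε (k + 1) i) ^ p
        ≤ lam * ∑ i, (sval b i + ε k i) ^ p
          + (lam * ∑ i, (p * (sval b i + ε k i) ^ (p - 1)) * sval a i
            - lam * ∑ i, (p * (sval b i + ε k i) ^ (p - 1)) * sval b i) := by
      have hsum : ∀ i, (sval a i + ε (k + 1) i) ^ p
          ≤ (sval b i + ε k i) ^ p + ((p * (sval b i + ε k i) ^ (p - 1)) * sval a i
            - (p * (sval b i + ε k i) ^ (p - 1)) * sval b i) := by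
        intro i
        have hu : 0 < sval b i + ε k i :=
          add_pos_of_nonneg_of_pos (sval_nonneg b i) (hε k i)
        have hv' : 0 ≤ sval a i + ε (k + 1) i :=
          add_nonneg (sval_nonneg a i) (hε (k + 1) i).le
        have ht := rpow_tangent hp0 hp1.le hu hv'
        have hw : 0 ≤ p * (sval b i + ε k i) ^ (p - 1) :=
          mul_nonneg hp0.le (Real.rpow_nonneg hu.le _)
        have hεd : ε (k + 1) i - ε k i ≤ 0 := by linarith [hεmono k i]
        have hprod : p * (sval b i + ε k i) ^ (p - 1) * (ε (k + 1) i - ε k i) ≤ 0 :=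
          mul_nonpos_of_nonneg_of_nonpos hw hεd
        nlinarith [ht, hprod]
      have hsums : ∑ i, (sval a i + ε (k + 1) i) ^ p
          ≤ ∑ i, ((sval b i + ε k i) ^ p + ((p * (sval b i + ε k i) ^ (p - 1)) * sval a i
            - (p * (sval b i + ε k i) ^ (p - 1)) * sval b i)) :=
        Finset.sum_le_sum fun i _ => hsum i
      rw [Finset.sum_add_distrib, Finset.sum_sub_distrib] at hsums
      have h2 := mul_le_mul_of_nonneg_left hsums hlam.le
      have h3 : lam * (∑ i, (sval b i + ε k i) ^ p
          + (∑ i, (p * (sval b i + ε k i) ^ (p - 1)) * sval a i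
            - ∑ i, (p * (sval b i + ε k i) ^ (p - 1)) * sval b i))
          = lam * ∑ i, (sval b i + ε k i) ^ p
            + (lam * ∑ i, (p * (sval b i + ε k i) ^ (p - 1)) * sval a i
              - lam * ∑ i, (p * (sval b i + ε k i) ^ (p - 1)) * sval b i) := by ring
      rw [h3] at h2
      exact h2
    -- elementary quadratic facts
    have hNay0 : (0 : ℝ) ≤ frobNorm (a - Y k) ^ 2 := sq_nonneg _
    have hNv0 : (0 : ℝ) ≤ frobNorm v ^ 2 := sq_nonneg _
    have hfact1 : Lf / 2 * frobNorm (a - Y k) ^ 2 ≤ β / 2 * frobNorm (a - Y k) ^ 2 :=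
      mul_le_mul_of_nonneg_right (by linarith) hNay0
    obtain ⟨hαk0, hαk1⟩ := Set.mem_Icc.mp (hα k)
    have hα2 : α k ^ 2 ≤ alphabar ^ 2 := pow_le_pow_left₀ hαk0 hαk1 2
    have hcoef : C + (Lf + β) / 2 * α k ^ 2 ≤ β / 2 := by
      rw [hCid]
      have e1 : (Lf + β) * α k ^ 2 ≤ (Lf + β) * alphabar ^ 2 :=
        mul_le_mul_of_nonneg_left hα2 (by linarith)
      have e2 : 0 ≤ Lf * alphabar ^ 2 := mul_nonneg hLf (sq_nonneg _)
      nlinarith [e1, e2]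
    have hfact2 : C * frobNorm v ^ 2 + (Lf + β) / 2 * (α k ^ 2 * frobNorm v ^ 2)
        ≤ β / 2 * frobNorm v ^ 2 := by
      have h2 := mul_le_mul_of_nonneg_right hcoef hNv0
      have h4 : (C + (Lf + β) / 2 * α k ^ 2) * frobNorm v ^ 2
          = C * frobNorm v ^ 2 + (Lf + β) / 2 * (α k ^ 2 * frobNorm v ^ 2) := by ring
      linarith [h2, h4]
    rw [hNby] at D2 M
    linarith [D1, D2, M, E, W, hfact1, hfact2]
  refine ⟨hC0, key, ?_, ?_⟩
  · apply antitone_nat_of_succ_le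
    intro k
    have h1 := key k
    have h2 : 0 ≤ C * frobNorm (X k - X (k - 1)) ^ 2 :=
      mul_nonneg hC0.le (sq_nonneg _)
    simp only [Nat.add_sub_cancel]
    linarith
  · -- convergence
    have hmono : Antitone (fun k : ℕ => f (X k) + β / 2 * frobNorm (X k - X (k - 1)) ^ 2
        + lam * ∑ i, (sval (X k) i + ε k i) ^ p) := by
      apply antitone_nat_of_succ_le
      intro k
      have h1 := key k
      have h2 : 0 ≤ C * frobNorm (X k - X (k - 1)) ^ 2 :=
        mul_nonneg hC0.le (sq_nonneg _)
      simp only [Nat.add_sub_cancel]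
      linarith
    set Hs : ℕ → ℝ := fun k : ℕ => f (X k) + β / 2 * frobNorm (X k - X (k - 1)) ^ 2
        + lam * ∑ i, (sval (X k) i + ε k i) ^ p with hHs
    have hFle : ∀ k, f (X k) + lam * (∑ i, sval (X k) i ^ p) ≤ Hs 0 := by
      intro k
      have hsum : ∑ i, sval (X k) i ^ p ≤ ∑ i, (sval (X k) i + ε k i) ^ p := by
        apply Finset.sum_le_sum
        intro i _
        exact Real.rpow_le_rpow (sval_nonneg _ _) (by linarith [hε k i]) hp0.le
      have h2 := mul_le_mul_of_nonneg_left hsum hlam.le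
      have hnn : 0 ≤ β / 2 * frobNorm (X k - X (k - 1)) ^ 2 :=
        mul_nonneg (by linarith) (sq_nonneg _)
      have h3 : f (X k) + lam * (∑ i, sval (X k) i ^ p) ≤ Hs k := by
        simp only [hHs]
        linarith
      exact h3.trans (hmono (Nat.zero_le k))
    obtain ⟨R, hR⟩ := hlevel (Hs 0)
    have hR0 : 0 ≤ R := le_trans (frob_nonneg (X 0)) (hR (X 0) (hFle 0))
    obtain ⟨M, hM⟩ := lb_on_ball (cont_of_grad hgrad) hR0
    have hbdd : BddBelow (Set.range Hs) := by
      refine ⟨M, ?_⟩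
      rintro x ⟨k, rfl⟩
      have h1 : M ≤ f (X k) := hM _ (hR _ (hFle k))
      have h2 : 0 ≤ lam * ∑ i, (sval (X k) i + ε k i) ^ p := by
        apply mul_nonneg hlam.le
        apply Finset.sum_nonneg
        intro i _
        exact Real.rpow_nonneg
          (add_nonneg (sval_nonneg _ _) (hε k i).le) p
      have h3 : 0 ≤ β / 2 * frobNorm (X k - X (k - 1)) ^ 2 :=
        mul_nonneg (by linarith) (sq_nonneg _)
      simp only [hHs]
      linarith
    exact ⟨_, tendsto_atTop_ciInf hmono hbdd⟩
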